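/- Let α = [a₀; \overline{b₁, …, b_l}] be the continued fraction expansion of a quadratic irrational (a₀ ∈ ℤ, bⱼ ≥ 1) with a₀ < b_l. Then the conjugate of α is given by the negative continued fraction ᾱ = −[b_l−a₀; \overline{b_{l−1}, …, b₁, b_l}], i.e. ᾱ = −(b_l−a₀ + 1/β̃) where β̃ = [\overline{b_{l−1}, b_{l−2}, …, b₁, b_l}] (indices cyclic modulo l; for l=1 this reads ᾱ = −[b₁−a₀; \overline{b₁}]). -/

import Mathlib

open Filter

noncomputable section

/-- Continued fraction numerators: `cfNum c (n+1) = pₙ` with `p₋₁ = 1`, `p₀ = c 0`,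
`pₙ = cₙ pₙ₋₁ + pₙ₋₂`. -/
def cfNum (c : ℕ → ℤ) : ℕ → ℤ
  | 0 => 1
  | 1 => c 0
  | n + 2 => c (n + 1) * cfNum c (n + 1) + cfNum c n

/-- Continued fraction denominators: `cfDen c (n+1) = qₙ` with `q₋₁ = 0`, `q₀ = 1`,
`qₙ = cₙ qₙ₋₁ + qₙ₋₂`. -/
def cfDen (c : ℕ → ℤ) : ℕ → ℤ
  | 0 => 0
  | 1 => 1
  | n + 2 => c (n + 1) * cfDen c (n + 1) + cfDen c n

/-- The `n`-th convergent `pₙ/qₙ` of the continued fraction with partial quotients `c`. -/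
def cfConv (c : ℕ → ℤ) (n : ℕ) : ℝ := (cfNum c (n + 1) : ℝ) / (cfDen c (n + 1) : ℝ)

/-- The Gauss map iterates of `α`. -/
def cfXi (α : ℝ) : ℕ → ℝ
  | 0 => α
  | n + 1 => 1 / Int.fract (cfXi α n)

/-- The `n`-th partial quotient of `α`. -/
def cfA (α : ℝ) (n : ℕ) : ℤ := ⌊cfXi α n⌋




lemma cfXi_irrational {x : ℝ} (h : Irrational x) : ∀ n, Irrational (cfXi x n)
  | 0 => h
  | n + 1 => by
    have ih := cfXi_irrational h n
    have hfr : Int.fract (cfXi x n) = cfXi x n - (⌊cfXi x n⌋ : ℝ) := rfl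
    have : Irrational (Int.fract (cfXi x n)) := by
      rw [hfr]; exact ih.sub_intCast ⌊cfXi x n⌋
    simpa [cfXi, one_div] using this.inv

lemma fract_pos_of_irrational {y : ℝ} (h : Irrational y) : 0 < Int.fract y := by
  rcases lt_or_eq_of_le (Int.fract_nonneg y) with h1 | h1
  · exact h1
  · exfalso
    have hfr : Int.fract y = y - (⌊y⌋ : ℝ) := rfl
    have : Irrational (Int.fract y) := by rw [hfr]; exact h.sub_intCast ⌊y⌋
    exact this.ne_int 0 (by simpa using h1.symm)

lemma cfXi_gt_one {x : ℝ} (h : Irrational x) (n : ℕ) : 1 < cfXi x (n + 1) := by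
  have hf : 0 < Int.fract (cfXi x n) := fract_pos_of_irrational (cfXi_irrational h n)
  have hf1 : Int.fract (cfXi x n) < 1 := Int.fract_lt_one _
  have : 1 < 1 / Int.fract (cfXi x n) := by
    rw [lt_div_iff₀ hf]; linarith
  simpa [cfXi] using this

lemma cfXi_pos {x : ℝ} (h : Irrational x) (n : ℕ) : 0 < cfXi x (n + 1) :=
  lt_trans one_pos (cfXi_gt_one h n)

/-- Key multiplicative identity: ξₙ ξₙ₊₁ = aₙ ξₙ₊₁ + 1. -/
lemma cfXi_mul_succ {x : ℝ} (h : Irrational x) (n : ℕ) :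
    cfXi x n * cfXi x (n + 1) = (cfA x n : ℝ) * cfXi x (n + 1) + 1 := by
  have hf : 0 < Int.fract (cfXi x n) := fract_pos_of_irrational (cfXi_irrational h n)
  have hx : cfXi x (n + 1) = 1 / Int.fract (cfXi x n) := rfl
  have hfr : Int.fract (cfXi x n) = cfXi x n - (cfA x n : ℝ) := rfl
  have hne : cfXi x n - (cfA x n : ℝ) ≠ 0 := by rw [← hfr]; exact ne_of_gt hf
  rw [hx, hfr]
  field_simp
  ring

lemma cfA_ge_one {x : ℝ} (h : Irrational x) (n : ℕ) : 1 ≤ cfA x (n + 1) := by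
  have := cfXi_gt_one h n
  have : (1 : ℤ) ≤ ⌊cfXi x (n + 1)⌋ := by
    rw [Int.le_floor]; exact_mod_cast (cfXi_gt_one h n).le
  exact this

lemma cfXi_add (x : ℝ) (m : ℕ) : ∀ n, cfXi x (m + n) = cfXi (cfXi x m) n
  | 0 => rfl
  | n + 1 => by
    rw [← Nat.add_assoc]
    show 1 / Int.fract (cfXi x (m + n)) = 1 / Int.fract (cfXi (cfXi x m) n)
    rw [cfXi_add x m n]

lemma cfA_add (x : ℝ) (m n : ℕ) : cfA x (m + n) = cfA (cfXi x m) n := by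
  unfold cfA; rw [cfXi_add]


lemma cfXi_eq_add {x : ℝ} (h : Irrational x) (n : ℕ) :
    cfXi x n = (cfA x n : ℝ) + 1 / cfXi x (n + 1) := by
  have h1 := cfXi_mul_succ h n
  have h2 := cfXi_pos h n
  field_simp at h1 ⊢
  linarith [h1]

lemma cfXi_pair_ge_two {x : ℝ} (h : Irrational x) (n : ℕ) :
    2 ≤ cfXi x (n + 1) * cfXi x (n + 2) := by
  have h1 := cfXi_mul_succ h (n + 1)
  have h2 := cfXi_gt_one h (n + 1)
  have h3 : (1 : ℝ) ≤ (cfA x (n + 1) : ℝ) := by exact_mod_cast cfA_ge_one h n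
  nlinarith

lemma cf_unique {x y : ℝ} (hx : Irrational x) (hy : Irrational y)
    (h : ∀ n, cfA x n = cfA y n) : x = y := by
  set P : ℕ → ℝ := fun n => ∏ k ∈ Finset.range n, (cfXi x (k + 1) * cfXi y (k + 1)) with hP
  have hPpos : ∀ n, 0 < P n := by
    intro n
    apply Finset.prod_pos
    intro k _
    exact mul_pos (cfXi_pos hx k) (cfXi_pos hy k)
  have key : ∀ n, (x - y) * P n = (-1 : ℝ) ^ n * (cfXi x n - cfXi y n) := by
    intro n
    induction n with
    | zero => simp [hP, cfXi]
    | succ n ih =>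
      have hxs := cfXi_eq_add hx n
      have hys := cfXi_eq_add hy n
      have hxp := cfXi_pos hx n
      have hyp := cfXi_pos hy n
      have hdiff : cfXi x n - cfXi y n =
          (cfXi y (n + 1) - cfXi x (n + 1)) / (cfXi x (n + 1) * cfXi y (n + 1)) := by
        rw [hxs, hys, h n]
        field_simp
        ring
      have : P (n + 1) = P n * (cfXi x (n + 1) * cfXi y (n + 1)) := by
        simp [hP, Finset.prod_range_succ]
      rw [this, ← mul_assoc, ih, hdiff]
      field_simp
      ring
  have growth : ∀ m, (4 : ℝ) ^ m ≤ P (2 * m) := by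
    intro m
    induction m with
    | zero => simp [hP]
    | succ m ih =>
      have e1 : P (2 * (m + 1)) = P (2 * m) *
          (cfXi x (2 * m + 1) * cfXi y (2 * m + 1)) *
          (cfXi x (2 * m + 2) * cfXi y (2 * m + 2)) := by
        have : 2 * (m + 1) = (2 * m + 1) + 1 := by ring
        rw [this]
        simp only [hP, Finset.prod_range_succ]
        try ring
      have hx2 := cfXi_pair_ge_two hx (2 * m)
      have hy2 := cfXi_pair_ge_two hy (2 * m)
      have hxp1 := cfXi_pos hx (2 * m)
      have hyp1 := cfXi_pos hy (2 * m)
      have hxp2 := cfXi_pos hx (2 * m + 1)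
      have hyp2 := cfXi_pos hy (2 * m + 1)
      have hrearr : P (2 * m) * (cfXi x (2 * m + 1) * cfXi y (2 * m + 1)) *
          (cfXi x (2 * m + 2) * cfXi y (2 * m + 2)) =
          P (2 * m) * ((cfXi x (2 * m + 1) * cfXi x (2 * m + 2)) *
          (cfXi y (2 * m + 1) * cfXi y (2 * m + 2))) := by ring
      rw [e1, hrearr]
      have h4 : (4 : ℝ) ≤ (cfXi x (2 * m + 1) * cfXi x (2 * m + 2)) *
          (cfXi y (2 * m + 1) * cfXi y (2 * m + 2)) := by nlinarith
      calc (4:ℝ) ^ (m+1) = 4 ^ m * 4 := by ring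
      _ ≤ P (2*m) * ((cfXi x (2 * m + 1) * cfXi x (2 * m + 2)) *
          (cfXi y (2 * m + 1) * cfXi y (2 * m + 2))) :=
        mul_le_mul ih h4 (by norm_num) (le_of_lt (hPpos _))
  have hbound : ∀ n, |cfXi x n - cfXi y n| ≤ 1 := by
    intro n
    have h1 : (cfA x n : ℝ) ≤ cfXi x n := Int.floor_le _
    have h2 : cfXi x n < (cfA x n : ℝ) + 1 := Int.lt_floor_add_one _
    have h3 : (cfA y n : ℝ) ≤ cfXi y n := Int.floor_le _
    have h4 : cfXi y n < (cfA y n : ℝ) + 1 := Int.lt_floor_add_one _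
    have := h n
    rw [abs_le]
    constructor <;> [skip; skip] <;>
    · have hc : (cfA x n : ℝ) = (cfA y n : ℝ) := by exact_mod_cast this
      linarith
  by_contra hne
  have habs : 0 < |x - y| := abs_pos.mpr (sub_ne_zero.mpr hne)
  obtain ⟨m, hm⟩ := pow_unbounded_of_one_lt (1 / |x - y|) (by norm_num : (1:ℝ) < 4)
  have hle : |x - y| * (4 : ℝ) ^ m ≤ 1 := by
    calc |x - y| * 4 ^ m ≤ |x - y| * P (2 * m) := by
          exact mul_le_mul_of_nonneg_left (growth m) (abs_nonneg _)
    _ = |(x - y) * P (2 * m)| := by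
          rw [abs_mul, abs_of_pos (hPpos _)]
    _ = |(-1 : ℝ) ^ (2*m) * (cfXi x (2*m) - cfXi y (2*m))| := by rw [key]
    _ = |cfXi x (2*m) - cfXi y (2*m)| := by
          rw [abs_mul, abs_pow, abs_neg, abs_one, one_pow, one_mul]
    _ ≤ 1 := hbound _
  have : 1 / |x - y| < 4 ^ m := hm
  rw [div_lt_iff₀ habs] at this
  nlinarith


/-- the shift/composition lemma -/
lemma cf_shift (c : ℕ → ℤ) (k : ℕ) : ∀ n,
    cfNum c (k + 1 + n) = cfNum c (k + 1) * cfNum (fun m => c (m + (k + 1))) n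
        + cfNum c k * cfDen (fun m => c (m + (k + 1))) n ∧
    cfDen c (k + 1 + n) = cfDen c (k + 1) * cfNum (fun m => c (m + (k + 1))) n
        + cfDen c k * cfDen (fun m => c (m + (k + 1))) n
  | 0 => by simp [cfNum, cfDen]
  | 1 => by
    have h1 : k + 1 + 1 = k + 2 := rfl
    constructor
    · rw [h1]
      show c (k + 1) * cfNum c (k + 1) + cfNum c k =
        cfNum c (k + 1) * c (0 + (k + 1)) + cfNum c k * 1
      ring_nf
    · rw [h1]
      show c (k + 1) * cfDen c (k + 1) + cfDen c k =
        cfDen c (k + 1) * c (0 + (k + 1)) + cfDen c k * 1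
      ring_nf
  | (n + 2) => by
    obtain ⟨ih1N, ih1D⟩ := cf_shift c k (n + 1)
    obtain ⟨ih0N, ih0D⟩ := cf_shift c k n
    set s : ℕ → ℤ := fun m => c (m + (k + 1)) with hs
    have hc : c (k + 1 + n + 1) = s (n + 1) := by simp [hs]; ring_nf
    have e1 : k + 1 + (n + 2) = (k + 1 + n) + 2 := by ring
    constructor
    · rw [e1]
      show c (k + 1 + n + 1) * cfNum c (k + 1 + n + 1) + cfNum c (k + 1 + n) = _
      have e2 : k + 1 + n + 1 = k + 1 + (n + 1) := by ring
      rw [hc, e2, ih1N, ih0N]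
      show _ = cfNum c (k+1) * (s (n+1) * cfNum s (n+1) + cfNum s n)
        + cfNum c k * (s (n+1) * cfDen s (n+1) + cfDen s n)
      ring
    · rw [e1]
      show c (k + 1 + n + 1) * cfDen c (k + 1 + n + 1) + cfDen c (k + 1 + n) = _
      have e2 : k + 1 + n + 1 = k + 1 + (n + 1) := by ring
      rw [hc, e2, ih1D, ih0D]
      show _ = cfDen c (k+1) * (s (n+1) * cfNum s (n+1) + cfNum s n)
        + cfDen c k * (s (n+1) * cfDen s (n+1) + cfDen s n)
      ring

lemma cfNum_rec (c : ℕ → ℤ) {l : ℕ} (hl : 1 ≤ l) :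
    cfNum c (l + 1) = c l * cfNum c l + cfNum c (l - 1) := by
  obtain ⟨m, rfl⟩ := Nat.exists_eq_add_of_le hl
  show cfNum c (1 + m + 1) = _
  have e : 1 + m + 1 = m + 2 := by ring
  have e2 : 1 + m = m + 1 := by ring
  rw [e, e2]
  show c (m + 1) * cfNum c (m + 1) + cfNum c m = _
  simp

lemma cfDen_rec (c : ℕ → ℤ) {l : ℕ} (hl : 1 ≤ l) :
    cfDen c (l + 1) = c l * cfDen c l + cfDen c (l - 1) := by
  obtain ⟨m, rfl⟩ := Nat.exists_eq_add_of_le hl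
  have e : 1 + m + 1 = m + 2 := by ring
  have e2 : 1 + m = m + 1 := by ring
  rw [e, e2]
  show c (m + 1) * cfDen c (m + 1) + cfDen c m = _
  simp

/-- reversal lemma -/
lemma cf_rev : ∀ l, 1 ≤ l → ∀ c : ℕ → ℤ,
    cfNum (fun i => c (l - 1 - i)) l = cfNum c l ∧
    cfDen (fun i => c (l - 1 - i)) l = cfNum c (l - 1) ∧
    cfNum (fun i => c (l - 1 - i)) (l - 1) = cfDen c l ∧
    cfDen (fun i => c (l - 1 - i)) (l - 1) = cfDen c (l - 1) := by
  intro l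
  induction l with
  | zero => omega
  | succ l ih =>
    intro _ c
    by_cases hl : 1 ≤ l
    case neg =>
      interval_cases l
      refine ⟨?_, ?_, ?_, ?_⟩ <;> simp [cfNum, cfDen]
    case pos =>
      obtain ⟨rN, rD, rN', rD'⟩ := ih hl c
      set d : ℕ → ℤ := fun i => c (l + 1 - 1 - i) with hd
      have hshift : (fun m => d (m + (0 + 1))) = fun i => c (l - 1 - i) := by
        funext m
        simp [hd]
        congr 1
        omega
      have hd0 : d 0 = c l := by simp [hd]
      have hN := fun n => ((cf_shift d 0 n).1)
      have hD := fun n => ((cf_shift d 0 n).2)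
      simp only [hshift, zero_add, cfNum, cfDen, one_mul, zero_mul, mul_one] at hN hD
      have key1 : cfNum d (l + 1) = c l * cfNum c l + cfNum c (l - 1) := by
        have := hN l
        rw [Nat.add_comm 1 l] at this
        rw [this, rN, rD, hd0]
      have key2 : cfDen d (l + 1) = cfNum c l := by
        have := hD l
        rw [Nat.add_comm 1 l] at this
        rw [this, rN]
        simp
      have key3 : cfNum d l = c l * cfDen c l + cfDen c (l - 1) := by
        have := hN (l - 1)
        have e : 1 + (l - 1) = l := by omega
        rw [e] at this
        rw [this, rN', rD', hd0]
      have key4 : cfDen d l = cfDen c l := by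
        have := hD (l - 1)
        have e : 1 + (l - 1) = l := by omega
        rw [e] at this
        rw [this, rN']
        simp
      refine ⟨?_, ?_, ?_, ?_⟩
      · rw [key1, cfNum_rec c hl]
      · rw [key2]; simp
      · simpa using key3.trans (cfDen_rec c hl).symm
      · simpa using key4


lemma cf_det (c : ℕ → ℤ) : ∀ n,
    cfNum c (n + 1) * cfDen c n - cfNum c n * cfDen c (n + 1) = (-1) ^ (n + 1)
  | 0 => by simp [cfNum, cfDen]
  | (n + 1) => by
    have ih := cf_det c n
    show (c (n+1) * cfNum c (n+1) + cfNum c n) * cfDen c (n+1)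
        - cfNum c (n+1) * (c (n+1) * cfDen c (n+1) + cfDen c n) = (-1) ^ (n + 2)
    have : (-1 : ℤ) ^ (n + 2) = -(-1 : ℤ) ^ (n + 1) := by ring
    rw [this, ← ih]; ring

lemma cfDen_facts {d : ℕ → ℤ} (hd : ∀ m, 1 ≤ d m) :
    ∀ n, 0 ≤ cfDen d n ∧ 1 ≤ cfDen d (n + 1) ∧ cfDen d n ≤ cfDen d (n + 1) := by
  intro n
  induction n with
  | zero => simp [cfDen]
  | succ n ih =>
    obtain ⟨h0, h1, h2⟩ := ih
    have hdn := hd (n + 1)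
    have he : cfDen d (n + 2) = d (n + 1) * cfDen d (n + 1) + cfDen d n := rfl
    refine ⟨by linarith, ?_, ?_⟩ <;> rw [he] <;> nlinarith

lemma cfDen_growth {d : ℕ → ℤ} (hd : ∀ m, 1 ≤ d m) :
    ∀ n, 2 ^ n ≤ cfDen d (n + 1) * cfDen d (n + 2) := by
  intro n
  induction n with
  | zero =>
    have := hd 1
    show (2:ℤ)^0 ≤ 1 * cfDen d 2
    have he : cfDen d 2 = d 1 * 1 + 0 := rfl
    rw [he]; simpa using this
  | succ n ih =>
    obtain ⟨h0, h1, h2⟩ := cfDen_facts hd (n + 1)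
    have h3 := (cfDen_facts hd n).1
    have hdn := hd (n + 2)
    have he : cfDen d (n + 3) = d (n + 2) * cfDen d (n + 2) + cfDen d (n + 1) := rfl
    have e : (2:ℤ) ^ (n + 1) = 2 * 2 ^ n := by ring
    show (2:ℤ) ^ (n+1) ≤ cfDen d (n + 2) * cfDen d (n + 3)
    rw [he, e]
    have hq2 : (0:ℤ) ≤ cfDen d (n + 2) := le_trans zero_le_one h1
    have A : cfDen d (n + 1) * cfDen d (n + 2) ≤ cfDen d (n + 2) * cfDen d (n + 2) :=
      mul_le_mul_of_nonneg_right h2 hq2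
    have B : cfDen d (n + 2) * cfDen d (n + 2) ≤
        d (n + 2) * cfDen d (n + 2) * cfDen d (n + 2) := by nlinarith
    nlinarith

lemma cfNum_ge_cfDen {d : ℕ → ℤ} (hd : ∀ m, 1 ≤ d m) :
    ∀ n, cfDen d n ≤ cfNum d n ∧ cfDen d (n + 1) ≤ cfNum d (n + 1) := by
  intro n
  induction n with
  | zero =>
    constructor
    · show (0:ℤ) ≤ 1; norm_num
    · show cfDen d 1 ≤ cfNum d 1
      have : cfNum d 1 = d 0 := rfl
      have h1 : cfDen d 1 = 1 := rfl
      rw [this, h1]; exact hd 0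
  | succ n ih =>
    obtain ⟨ih0, ih1⟩ := ih
    refine ⟨ih1, ?_⟩
    have heN : cfNum d (n + 2) = d (n + 1) * cfNum d (n + 1) + cfNum d n := rfl
    have heD : cfDen d (n + 2) = d (n + 1) * cfDen d (n + 1) + cfDen d n := rfl
    have hdn := hd (n + 1)
    have h1 := (cfDen_facts hd n).1
    have h2 := (cfDen_facts hd n).2.1
    rw [heN, heD]
    nlinarith

lemma cfNum_congr (c c' : ℕ → ℤ) : ∀ n, (∀ i, i < n → c i = c' i) → cfNum c n = cfNum c' n
  | 0, _ => rfl
  | 1, h => h 0 one_pos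
  | (n + 2), h => by
    have h1 := cfNum_congr c c' (n + 1) (fun i hi => h i (by omega))
    have h0 := cfNum_congr c c' n (fun i hi => h i (by omega))
    show c (n + 1) * cfNum c (n + 1) + cfNum c n = c' (n + 1) * cfNum c' (n + 1) + cfNum c' n
    rw [h1, h0, h (n + 1) (by omega)]

lemma cfDen_congr (c c' : ℕ → ℤ) : ∀ n, (∀ i, i < n → c i = c' i) → cfDen c n = cfDen c' n
  | 0, _ => rfl
  | 1, _ => rfl
  | (n + 2), h => by
    have h1 := cfDen_congr c c' (n + 1) (fun i hi => h i (by omega))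
    have h0 := cfDen_congr c c' n (fun i hi => h i (by omega))
    show c (n + 1) * cfDen c (n + 1) + cfDen c n = c' (n + 1) * cfDen c' (n + 1) + cfDen c' n
    rw [h1, h0, h (n + 1) (by omega)]

lemma cfNum_ge_one {d : ℕ → ℤ} (hd : ∀ m, 1 ≤ d m) : ∀ n, 1 ≤ cfNum d n
  | 0 => le_refl 1
  | (n + 1) => le_trans (cfDen_facts hd n).2.1 (cfNum_ge_cfDen hd n).2

lemma cfConv_ge_one {d : ℕ → ℤ} (hd : ∀ m, 1 ≤ d m) (n : ℕ) : 1 ≤ cfConv d n := by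
  have h1 : (1:ℝ) ≤ (cfDen d (n+1) : ℝ) := by exact_mod_cast (cfDen_facts hd n).2.1
  have hle : (cfDen d (n+1) : ℝ) ≤ (cfNum d (n+1) : ℝ) := by
    exact_mod_cast (cfNum_ge_cfDen hd n).2
  rw [cfConv, le_div_iff₀ (lt_of_lt_of_le one_pos h1), one_mul]
  exact hle


/-- the fundamental identity x = (pₙ ξₙ₊₁ + pₙ₋₁)/(qₙ ξₙ₊₁ + qₙ₋₁), cleared of denominators. -/
lemma cf_gauss {x : ℝ} (h : Irrational x) : ∀ n,
    x * ((cfDen (cfA x) (n + 1) : ℝ) * cfXi x (n + 1) + (cfDen (cfA x) n : ℝ))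
      = (cfNum (cfA x) (n + 1) : ℝ) * cfXi x (n + 1) + (cfNum (cfA x) n : ℝ) := by
  intro n
  induction n with
  | zero =>
    have h0 := cfXi_mul_succ h 0
    have : cfXi x 0 = x := rfl
    rw [this] at h0
    show x * ((1 : ℤ) * cfXi x 1 + ((0:ℤ):ℝ)) = ((cfA x 0 : ℤ) : ℝ) * cfXi x 1 + ((1:ℤ):ℝ)
    push_cast
    rw [one_mul]
    simpa using h0
  | succ n ih =>
    have hmul := cfXi_mul_succ h (n + 1)
    have hN : (cfNum (cfA x) (n + 2) : ℝ)
        = (cfA x (n + 1) : ℝ) * (cfNum (cfA x) (n + 1) : ℝ) + (cfNum (cfA x) n : ℝ) := by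
      have : cfNum (cfA x) (n + 2) = cfA x (n + 1) * cfNum (cfA x) (n + 1) + cfNum (cfA x) n := rfl
      rw [this]; push_cast; ring
    have hD : (cfDen (cfA x) (n + 2) : ℝ)
        = (cfA x (n + 1) : ℝ) * (cfDen (cfA x) (n + 1) : ℝ) + (cfDen (cfA x) n : ℝ) := by
      have : cfDen (cfA x) (n + 2) = cfA x (n + 1) * cfDen (cfA x) (n + 1) + cfDen (cfA x) n := rfl
      rw [this]; push_cast; ring
    rw [hN, hD]
    linear_combination cfXi x (n + 2) * ih
      + ((cfNum (cfA x) (n + 1) : ℝ) - x * (cfDen (cfA x) (n + 1) : ℝ)) * hmul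

/-- convergence of a continued fraction with partial quotients ≥ 1 -/
lemma cf_converges {d : ℕ → ℤ} (hd : ∀ m, 1 ≤ d m) :
    ∃ β : ℝ, 1 ≤ β ∧ Tendsto (cfConv d) atTop (nhds β) := by
  have hq1 : ∀ n, (1:ℝ) ≤ (cfDen d (n+1) : ℝ) := by
    intro n; exact_mod_cast (cfDen_facts hd n).2.1
  have hqpos : ∀ n, (0:ℝ) < (cfDen d (n+1) : ℝ) := fun n => lt_of_lt_of_le one_pos (hq1 n)
  have hdist : ∀ n, dist (cfConv d n) (cfConv d (n + 1)) ≤ 1 * (1/2 : ℝ) ^ n := by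
    intro n
    have hdet := cf_det d (n + 1)
    have hg := cfDen_growth hd n
    rw [dist_comm, Real.dist_eq]
    have e : cfConv d (n+1) - cfConv d n =
        ((cfNum d (n+2) : ℝ) * (cfDen d (n+1) : ℝ) - (cfNum d (n+1) : ℝ) * (cfDen d (n+2) : ℝ))
        / ((cfDen d (n+1) : ℝ) * (cfDen d (n+2) : ℝ)) := by
      have h1 : ((cfDen d (n+1) : ℝ)) ≠ 0 := ne_of_gt (hqpos n)
      have h2 : ((cfDen d (n+2) : ℝ)) ≠ 0 := ne_of_gt (hqpos (n+1))
      unfold cfConv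
      field_simp
    have e2 : ((cfNum d (n+2) : ℝ) * (cfDen d (n+1) : ℝ)
        - (cfNum d (n+1) : ℝ) * (cfDen d (n+2) : ℝ)) = (-1 : ℝ) ^ (n + 2) := by
      exact_mod_cast hdet
    rw [e, e2, abs_div, abs_pow, abs_neg, abs_one, one_pow]
    have hprod : (2:ℝ) ^ n ≤ (cfDen d (n+1) : ℝ) * (cfDen d (n+2) : ℝ) := by
      exact_mod_cast hg
    have hpp : (0:ℝ) < (cfDen d (n+1) : ℝ) * (cfDen d (n+2) : ℝ) :=
      mul_pos (hqpos n) (hqpos (n+1))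
    rw [abs_of_pos hpp, one_mul, div_le_iff₀ hpp]
    calc (1:ℝ) ≤ (1/2)^n * 2^n := by
          rw [← mul_pow]; norm_num
    _ ≤ (1/2)^n * ((cfDen d (n+1) : ℝ) * (cfDen d (n+2) : ℝ)) := by
          apply mul_le_mul_of_nonneg_left hprod (by positivity)
  have hcauchy : CauchySeq (cfConv d) :=
    cauchySeq_of_le_geometric (1/2) 1 (by norm_num) hdist
  obtain ⟨β, hβ⟩ := cauchySeq_tendsto_of_complete hcauchy
  refine ⟨β, ?_, hβ⟩
  have hconv1 : ∀ n, (1:ℝ) ≤ cfConv d n := by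
    intro n
    have := (cfNum_ge_cfDen hd n).2
    have hle : (cfDen d (n+1) : ℝ) ≤ (cfNum d (n+1) : ℝ) := by exact_mod_cast this
    rw [cfConv, le_div_iff₀ (hqpos n), one_mul]
    exact hle
  exact ge_of_tendsto hβ (Eventually.of_forall hconv1)


/-- If the quadratic irrational `α` has continued fraction expansion
`[a₀; overline{b₁, …, b_l}]` with `a₀ < b_l`, then its conjugate is given by the negative
continued fraction `ᾱ = -[b_l - a₀; overline{b_{l-1}, …, b₁, b_l}]`, i.e.
`ᾱ = -(b_l - a₀ + 1/β̃)` where `β̃ = [overline{b_{l-1}, b_{l-2}, …, b₁, b_l}]`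
(indices cyclic modulo `l`). Here `b j` denotes `b_{j+1}` for `0 ≤ j < l`, so the period
entry at position `m` is `b ((2*l-2-m) % l)`. -/
theorem conjugate_cf_pure_periodic_case_lt (l : ℕ) (a0 : ℤ) (b : ℕ → ℤ) (hl : 1 ≤ l)
    (hb : ∀ j, j < l → 1 ≤ b j) (hlt : a0 < b (l - 1))
    (α α' : ℝ) (qa qh qb : ℤ) (hqa : qa ≠ 0) (hirr : Irrational α)
    (hroot : (qa : ℝ) * α ^ 2 + (qh : ℝ) * α + (qb : ℝ) = 0)
    (hroot' : (qa : ℝ) * α' ^ 2 + (qh : ℝ) * α' + (qb : ℝ) = 0)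
    (hne : α' ≠ α)
    (hexp : ∀ n, cfA α n = if n = 0 then a0 else b ((n - 1) % l)) :
    ∃ β : ℝ, Tendsto (cfConv (fun m => b ((2 * l - 2 - m % l) % l))) atTop (nhds β) ∧
      α' = -(((b (l - 1) - a0 : ℤ) : ℝ) + 1 / β) := by
  obtain ⟨L, rfl⟩ : ∃ L, l = L + 1 := ⟨l - 1, by omega⟩
  simp only [Nat.add_sub_cancel] at hlt ⊢
  have hlpos : 0 < L + 1 := Nat.succ_pos L
  -- the two periodic sequences
  set c : ℕ → ℤ := fun m => b ((m + (L + 1) - 1) % (L + 1)) with hcdef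
  set d : ℕ → ℤ := fun m => b ((2 * (L + 1) - 2 - m % (L + 1)) % (L + 1)) with hddef
  have hc1 : ∀ m, 1 ≤ c m := fun m => hb _ (Nat.mod_lt _ hlpos)
  have hd1 : ∀ m, 1 ≤ d m := fun m => hb _ (Nat.mod_lt _ hlpos)
  have hc0 : c 0 = b L := by
    show b ((0 + (L + 1) - 1) % (L + 1)) = b L
    congr 1
    rw [show 0 + (L + 1) - 1 = L by omega]
    exact Nat.mod_eq_of_lt (by omega)
  have hcper : ∀ n, c ((L + 1) + n) = c n := by
    intro n
    show b ((L + 1 + n + (L + 1) - 1) % (L + 1)) = b ((n + (L + 1) - 1) % (L + 1))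
    congr 1
    rw [show L + 1 + n + (L + 1) - 1 = (n + (L + 1) - 1) + (L + 1) by omega, Nat.add_mod_right]
  have hdper : ∀ m, d (m + (L + 1)) = d m := by
    intro m
    show b ((2 * (L + 1) - 2 - (m + (L + 1)) % (L + 1)) % (L + 1)) = _
    rw [Nat.add_mod_right]
  have hdc : ∀ i, i < L + 1 → d i = c (L + 1 - 1 - i) := by
    intro i hi
    show b ((2 * (L + 1) - 2 - i % (L + 1)) % (L + 1))
      = b ((L + 1 - 1 - i + (L + 1) - 1) % (L + 1))
    congr 2
    rw [Nat.mod_eq_of_lt hi]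
    omega
  -- γ = α + (b L - a0)
  set t : ℤ := b L - a0 with htdef
  set γ : ℝ := α + (t : ℝ) with hγdef
  have hγirr : Irrational γ := hirr.add_intCast t
  have hfloorα : ⌊α⌋ = a0 := by
    have := hexp 0
    simpa [cfA, cfXi] using this
  have hfloorγ : ⌊γ⌋ = b L := by
    rw [hγdef, Int.floor_add_intCast, hfloorα, htdef]; ring
  have hbL1 : (1 : ℤ) ≤ b L := hb L (by omega)
  have hγge1 : (1 : ℝ) ≤ γ := by
    have h1 : ((b L : ℤ) : ℝ) ≤ γ := by rw [← hfloorγ]; exact Int.floor_le γ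
    have h2 : (1 : ℝ) ≤ ((b L : ℤ) : ℝ) := by exact_mod_cast hbL1
    linarith
  have hγpos : (0 : ℝ) < γ := lt_of_lt_of_le one_pos hγge1
  -- the partial quotients of γ are c
  have hxi1 : cfXi γ 1 = cfXi α 1 := by
    show 1 / Int.fract γ = 1 / Int.fract α
    rw [hγdef, Int.fract_add_intCast]
  have hxiγ : ∀ n, cfXi γ (1 + n) = cfXi α (1 + n) := by
    intro n
    rw [cfXi_add γ 1 n, cfXi_add α 1 n, hxi1]
  have hAγ : ∀ n, cfA γ n = c n := by
    intro n
    match n with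
    | 0 =>
      show ⌊cfXi γ 0⌋ = c 0
      have h0 : cfXi γ 0 = γ := rfl
      rw [h0, hfloorγ, hc0]
    | (m + 1) =>
      have h1 : cfA γ (m + 1) = cfA α (m + 1) := by
        unfold cfA
        rw [show m + 1 = 1 + m by omega, hxiγ m]
      have hcm : c (m + 1) = b (m % (L + 1)) := by
        show b ((m + 1 + (L + 1) - 1) % (L + 1)) = b (m % (L + 1))
        congr 1
        rw [show m + 1 + (L + 1) - 1 = m + (L + 1) by omega, Nat.add_mod_right]
      rw [h1, hexp (m + 1), hcm]
      simp
  have hAγfun : cfA γ = c := funext hAγ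
  clear_value c d
  -- periodicity: cfXi γ (L+1) = γ
  have hper : cfXi γ (L + 1) = γ := by
    apply cf_unique (cfXi_irrational hγirr (L + 1)) hγirr
    intro n
    rw [← cfA_add γ (L + 1) n, hAγ (L + 1 + n), hAγ n]
    exact hcper n
  -- Gauss identity at one full period
  have hg := cf_gauss hγirr L
  rw [hAγfun, hper] at hg
  -- convergence of the reversed continued fraction
  obtain ⟨β, hβ1, hβ⟩ := cf_converges hd1
  refine ⟨β, hβ, ?_⟩
  -- reversal identities
  obtain ⟨rN, rD, rN', rD'⟩ := cf_rev (L + 1) (by omega) c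
  simp only [Nat.add_sub_cancel] at rN rD rN' rD'
  have eq_dN : cfNum d (L + 1) = cfNum c (L + 1) := by
    rw [← rN]
    exact cfNum_congr _ _ _ (fun i hi => by rw [hdc i hi]; simp)
  have eq_dD : cfDen d (L + 1) = cfNum c L := by
    rw [← rD]
    exact cfDen_congr _ _ _ (fun i hi => by rw [hdc i hi]; simp)
  have eq_dN' : cfNum d L = cfDen c (L + 1) := by
    rw [← rN']
    exact cfNum_congr _ _ _ (fun i hi => by rw [hdc i (by omega)]; simp)
  have eq_dD' : cfDen d L = cfDen c L := by
    rw [← rD']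
    exact cfDen_congr _ _ _ (fun i hi => by rw [hdc i (by omega)]; simp)
  -- Möbius relation for the convergents after one period
  have hshiftfun : (fun m => d (m + (L + 1))) = d := funext hdper
  have hDpos : ∀ n, (0 : ℝ) < (cfDen d (n + 1) : ℝ) := fun n => by
    exact_mod_cast lt_of_lt_of_le zero_lt_one ((cfDen_facts hd1 n).2.1)
  have hfge1 := cfConv_ge_one hd1
  have hP'ge1 : (1 : ℝ) ≤ (cfDen d (L + 1) : ℝ) := by
    exact_mod_cast (cfDen_facts hd1 L).2.1
  have hQ'nn : (0 : ℝ) ≤ (cfDen d L : ℝ) := by exact_mod_cast (cfDen_facts hd1 L).1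
  have hfconv : ∀ n, cfConv d (n + (L + 1)) =
      ((cfNum d (L + 1) : ℝ) * cfConv d n + (cfNum d L : ℝ)) /
      ((cfDen d (L + 1) : ℝ) * cfConv d n + (cfDen d L : ℝ)) := by
    intro n
    have hN := (cf_shift d L (n + 1)).1
    have hD := (cf_shift d L (n + 1)).2
    rw [hshiftfun] at hN hD
    have hNr : (cfNum d (L + 1 + (n + 1)) : ℝ)
        = (cfNum d (L + 1) : ℝ) * (cfNum d (n + 1) : ℝ)
          + (cfNum d L : ℝ) * (cfDen d (n + 1) : ℝ) := by exact_mod_cast hN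
    have hDr : (cfDen d (L + 1 + (n + 1)) : ℝ)
        = (cfDen d (L + 1) : ℝ) * (cfNum d (n + 1) : ℝ)
          + (cfDen d L : ℝ) * (cfDen d (n + 1) : ℝ) := by exact_mod_cast hD
    have hidx : n + (L + 1) + 1 = L + 1 + (n + 1) := by omega
    have hden1 : ((cfDen d (n + 1)) : ℝ) ≠ 0 := ne_of_gt (hDpos n)
    have hMden : (0 : ℝ) < (cfDen d (L + 1) : ℝ) * cfConv d n + (cfDen d L : ℝ) := by
      nlinarith [hfge1 n]
    have hconvn : cfConv d n = (cfNum d (n + 1) : ℝ) / (cfDen d (n + 1) : ℝ) := rfl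
    rw [cfConv, hidx, hNr, hDr, hconvn]
    rw [hconvn] at hMden
    have hMden' : (cfDen d (L + 1) : ℝ) * ((cfNum d (n + 1) : ℝ) / (cfDen d (n + 1) : ℝ))
        + (cfDen d L : ℝ) ≠ 0 := ne_of_gt hMden
    field_simp
    try ring
  have htend1 : Tendsto (fun n => cfConv d (n + (L + 1))) atTop (nhds β) :=
    hβ.comp (tendsto_add_atTop_nat (L + 1))
  have hdenβ : (0 : ℝ) < (cfDen d (L + 1) : ℝ) * β + (cfDen d L : ℝ) := by nlinarith
  have htend2 : Tendsto (fun n =>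
      ((cfNum d (L + 1) : ℝ) * cfConv d n + (cfNum d L : ℝ)) /
      ((cfDen d (L + 1) : ℝ) * cfConv d n + (cfDen d L : ℝ))) atTop
      (nhds (((cfNum d (L + 1) : ℝ) * β + (cfNum d L : ℝ)) /
      ((cfDen d (L + 1) : ℝ) * β + (cfDen d L : ℝ)))) := by
    apply Tendsto.div
    · exact (hβ.const_mul _).add tendsto_const_nhds
    · exact (hβ.const_mul _).add tendsto_const_nhds
    · exact ne_of_gt hdenβ
  have hβeq : β = ((cfNum d (L + 1) : ℝ) * β + (cfNum d L : ℝ)) /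
      ((cfDen d (L + 1) : ℝ) * β + (cfDen d L : ℝ)) :=
    tendsto_nhds_unique (htend1.congr hfconv) htend2
  rw [eq_div_iff (ne_of_gt hdenβ)] at hβeq
  -- translate to forward-period quantities
  rw [eq_dN, eq_dD, eq_dN', eq_dD'] at hβeq
  -- quadratics
  have hβquad : (cfNum c L : ℝ) * β ^ 2 + ((cfDen c L : ℝ) - (cfNum c (L + 1) : ℝ)) * β
      - (cfDen c (L + 1) : ℝ) = 0 := by linear_combination hβeq
  have hγquad : (cfDen c (L + 1) : ℝ) * γ ^ 2 + ((cfDen c L : ℝ) - (cfNum c (L + 1) : ℝ)) * γ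
      - (cfNum c L : ℝ) = 0 := by linear_combination hg
  -- conjugate: γb = α' + t satisfies the same quadratic as γ
  set γb : ℝ := α' + (t : ℝ) with hγbdef
  set E2 : ℤ := cfDen c L - cfNum c (L + 1) with hE2def
  set Dq : ℤ := cfDen c (L + 1) with hDqdef
  set Np' : ℤ := cfNum c L with hNpdef
  set B : ℤ := qh - 2 * qa * t with hBdef
  set C : ℤ := qa * t ^ 2 - qh * t + qb with hCdef
  clear_value γ γb t E2 Dq Np' B C
  have hγquad' : (Dq : ℝ) * γ ^ 2 + (E2 : ℝ) * γ - (Np' : ℝ) = 0 := by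
    rw [hE2def]; push_cast; linear_combination hγquad
  have hroot2 : (qa : ℝ) * γ ^ 2 + (B : ℝ) * γ + (C : ℝ) = 0 := by
    rw [hγdef, hBdef, hCdef]; push_cast; linear_combination hroot
  have hroot2' : (qa : ℝ) * γb ^ 2 + (B : ℝ) * γb + (C : ℝ) = 0 := by
    rw [hγbdef, hBdef, hCdef]; push_cast; linear_combination hroot'
  have hlin : ((Dq * B - qa * E2 : ℤ) : ℝ) * γ + ((Dq * C + qa * Np' : ℤ) : ℝ) = 0 := by
    push_cast
    linear_combination (Dq : ℝ) * hroot2 - (qa : ℝ) * hγquad'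
  have hu0 : Dq * B - qa * E2 = 0 := by
    by_contra hu
    have hune : ((Dq * B - qa * E2 : ℤ) : ℝ) ≠ 0 := Int.cast_ne_zero.mpr hu
    have hγrat : γ = ((-(Dq * C + qa * Np') : ℤ) : ℝ) / ((Dq * B - qa * E2 : ℤ) : ℝ) := by
      rw [eq_div_iff hune]
      push_cast at hlin ⊢
      linarith [hlin]
    have h2 : ((((-(Dq * C + qa * Np') : ℤ) : ℚ) / ((Dq * B - qa * E2 : ℤ) : ℚ) : ℚ) : ℝ) = γ := by
      rw [hγrat]; push_cast; ring
    exact (Rat.not_irrational _) (h2 ▸ hγirr)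
  have hv0 : Dq * C + qa * Np' = 0 := by
    have h3 : ((Dq * B - qa * E2 : ℤ) : ℝ) = 0 := by rw [hu0]; simp
    rw [h3, zero_mul, zero_add] at hlin
    exact_mod_cast hlin
  have hqaR : (qa : ℝ) ≠ 0 := Int.cast_ne_zero.mpr hqa
  have hqbar : (Dq : ℝ) * γb ^ 2 + (E2 : ℝ) * γb - (Np' : ℝ) = 0 := by
    have hu' : ((Dq * B - qa * E2 : ℤ) : ℝ) = 0 := by rw [hu0]; simp
    have hv' : ((Dq * C + qa * Np' : ℤ) : ℝ) = 0 := by rw [hv0]; simp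
    push_cast at hu' hv'
    have h3 : (qa : ℝ) * ((Dq : ℝ) * γb ^ 2 + (E2 : ℝ) * γb - (Np' : ℝ)) = 0 := by
      linear_combination (Dq : ℝ) * hroot2' - γb * hu' - hv'
    rcases mul_eq_zero.mp h3 with h | h
    · exact absurd h hqaR
    · exact h
  -- γb < 0
  have hγne : γ ≠ γb := by
    intro h
    apply hne
    have : α' + (t : ℝ) = α + (t : ℝ) := by rw [← hγbdef, ← h, hγdef]
    linarith
  have hfac : (γ - γb) * ((Dq : ℝ) * (γ + γb) + (E2 : ℝ)) = 0 := by
    linear_combination hγquad' - hqbar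
  have hsum : (Dq : ℝ) * (γ + γb) + (E2 : ℝ) = 0 :=
    (mul_eq_zero.mp hfac).resolve_left (sub_ne_zero.mpr hγne)
  have hprod : (Dq : ℝ) * γ * γb = -(Np' : ℝ) := by
    linear_combination γ * hsum - hγquad'
  have hNp'ge : (1 : ℝ) ≤ (Np' : ℝ) := by
    rw [hNpdef]; exact_mod_cast cfNum_ge_one hc1 L
  have hDqge : (1 : ℝ) ≤ (Dq : ℝ) := by
    rw [hDqdef]; exact_mod_cast (cfDen_facts hc1 L).2.1
  have hγbneg : γb < 0 := by
    by_contra hh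
    push_neg at hh
    have h4 : (0:ℝ) ≤ (Dq : ℝ) * γ * γb :=
      mul_nonneg (mul_nonneg (by linarith) (le_of_lt hγpos)) hh
    linarith [hprod, hNp'ge]
  have hγbne : γb ≠ 0 := ne_of_lt hγbneg
  -- -1/γb is a positive root of the β-quadratic
  have hsquad : (Np' : ℝ) * (-1 / γb) ^ 2 + (E2 : ℝ) * (-1 / γb) - (Dq : ℝ) = 0 := by
    have key : (Np' : ℝ) = (Dq : ℝ) * γb ^ 2 + (E2 : ℝ) * γb := by linarith [hqbar]
    rw [key]
    field_simp
    ring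
  have hβquad2 : (Np' : ℝ) * β ^ 2 + (E2 : ℝ) * β - (Dq : ℝ) = 0 := by
    rw [hE2def]; push_cast; linear_combination hβquad
  have hspos : (0 : ℝ) < -1 / γb := by
    have h1 : (0 : ℝ) < -γb := neg_pos.mpr hγbneg
    rw [show (-1 : ℝ) / γb = 1 / (-γb) by ring]
    positivity
  have hβs : β = -1 / γb := by
    by_contra hne2
    have hfac2 : (β - (-1 / γb)) * ((Np' : ℝ) * (β + (-1 / γb)) + (E2 : ℝ)) = 0 := by
      linear_combination hβquad2 - hsquad
    have hsum2 : (Np' : ℝ) * (β + (-1 / γb)) + (E2 : ℝ) = 0 :=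
      (mul_eq_zero.mp hfac2).resolve_left (sub_ne_zero.mpr hne2)
    have hprod2 : (Np' : ℝ) * β * (-1 / γb) = -(Dq : ℝ) := by
      linear_combination β * hsum2 - hβquad2
    have hP : (0:ℝ) < (Np' : ℝ) * β :=
      mul_pos (lt_of_lt_of_le zero_lt_one hNp'ge) (lt_of_lt_of_le zero_lt_one hβ1)
    have hPP : (0:ℝ) < (Np' : ℝ) * β * (-1 / γb) := mul_pos hP hspos
    linarith [hprod2, hDqge]
  -- conclude
  have hβpos : (0 : ℝ) < β := lt_of_lt_of_le zero_lt_one hβ1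
  have hγb_eq : γb = -(1 / β) := by
    rw [hβs]
    field_simp
  have hα' : α' = γb - (t : ℝ) := by rw [hγbdef]; ring
  rw [hα', hγb_eq, htdef]
  push_cast
  ring


end
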